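/- Let p : ℤ² → [0,∞) be the transition kernel of an aperiodic, irreducible, symmetric, finite-range random walk on ℤ². For N ≥ 2 let Λ_N = [-N,N]² ∩ ℤ² and define ψ_i = R · P_i[T_{0} < τ_{Λ_N}], where T_{0} is the hitting time of 0 and τ_{Λ_N} is the exit time of Λ_N. Then ψ₀ = R, ψ_i = 0 for i ∉ Λ_N, and there is a constant C (depending only on p) with (1/2) Σ_{i,j∈Λ_N} p(i-j)(ψ_i - ψ_j)² + Σ_{i∈Λ_N, j∉Λ_N} p(i-j) ψ_i² ≤ C R² / log N. -/

import Mathlib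

open MeasureTheory

/-- The box `Λ_N = [-N, N]² ∩ ℤ²`. -/
noncomputable def ΛN (N : ℕ) : Finset (ℤ × ℤ) :=
  Finset.Icc (-(N : ℤ)) (N : ℤ) ×ˢ Finset.Icc (-(N : ℤ)) (N : ℤ)

/-- Total weight of the kernel `p` from `i` to the complement of `Λ`:
`Σ_{j ∉ Λ} p (i - j)`. -/
noncomputable def bdryWeight (p : ℤ × ℤ → ℝ) (Λ : Finset (ℤ × ℤ)) (i : ℤ × ℤ) : ℝ :=
  ∑' j : ℤ × ℤ, if j ∈ Λ then 0 else p (i - j)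

/-- The finite-volume Hamiltonian with zero boundary condition and linear field `η`:
`H(φ) = ½ Σ_{i,j∈Λ} p(i-j) V(φ_i-φ_j) + Σ_{i∈Λ, j∉Λ} p(i-j) V(φ_i) - Σ_{i∈Λ} η_i φ_i`. -/
noncomputable def ham (p : ℤ × ℤ → ℝ) (V : ℝ → ℝ) (Λ : Finset (ℤ × ℤ))
    (η : ℤ × ℤ → ℝ) (φ : ↥Λ → ℝ) : ℝ :=
  (1 / 2) * ∑ i : ↥Λ, ∑ j : ↥Λ, p ((i : ℤ × ℤ) - (j : ℤ × ℤ)) * V (φ i - φ j)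
    + ∑ i : ↥Λ, bdryWeight p Λ (i : ℤ × ℤ) * V (φ i)
    - ∑ i : ↥Λ, η (i : ℤ × ℤ) * φ i

/-- The finite-volume quenched Gibbs measure with zero boundary condition: the probability
measure on `ℝ^Λ` with density proportional to `exp (-H(φ))`. -/
noncomputable def gibbs (p : ℤ × ℤ → ℝ) (V : ℝ → ℝ) (Λ : Finset (ℤ × ℤ))
    (η : ℤ × ℤ → ℝ) : Measure (↥Λ → ℝ) :=
  (ENNReal.ofReal (∫ φ : ↥Λ → ℝ, Real.exp (-ham p V Λ η φ)))⁻¹ •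
    volume.withDensity (fun φ => ENNReal.ofReal (Real.exp (-ham p V Λ η φ)))

/-- The origin as a point of `Λ_N`. -/
def origin (N : ℕ) : ↥(ΛN N) :=
  ⟨(0, 0), by simp [ΛN]⟩

/-- Positions of a path started at `i` with steps `s`: `pos k = i + Σ_{j<k} s j`. -/
def pathPos (i : ℤ × ℤ) {n : ℕ} (s : Fin n → ℤ × ℤ) (k : ℕ) : ℤ × ℤ :=
  i + ∑ j : Fin n, if (j : ℕ) < k then s j else 0

open Classical in
/-- `P_i[T_{0} < τ_Λ]`: the probability that the random walk with step kernel `p` started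
at `i` hits the origin before exiting `Λ`, expressed as the total weight of finite paths
staying in `Λ \ {0}` until they reach `0`. -/
noncomputable def hitProb (p : ℤ × ℤ → ℝ) (Λ : Finset (ℤ × ℤ)) (i : ℤ × ℤ) : ℝ :=
  ∑' n : ℕ, ∑' s : Fin n → ℤ × ℤ,
    if (∀ k < n, pathPos i s k ∈ Λ ∧ pathPos i s k ≠ (0, 0)) ∧ pathPos i s n = (0, 0)
    then ∏ k, p (s k) else 0

/-- `p` is the transition kernel of an aperiodic, irreducible, symmetric, finite-range
random walk on `ℤ²`. -/
structure IsNiceKernel (p : ℤ × ℤ → ℝ) : Prop where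
  nonneg : ∀ x, 0 ≤ p x
  symm : ∀ x, p (-x) = p x
  total : HasSum p 1
  finiteRange : ∃ Rg : ℕ, ∀ x : ℤ × ℤ, p x ≠ 0 → |x.1| ≤ Rg ∧ |x.2| ≤ Rg
  irreducible : ∀ x : ℤ × ℤ, ∃ n : ℕ, ∃ s : Fin n → ℤ × ℤ,
    (∀ k, p (s k) ≠ 0) ∧ ∑ k, s k = x
  aperiodic : ∃ N₀ : ℕ, ∀ n ≥ N₀, ∃ s : Fin n → ℤ × ℤ,
    (∀ k, p (s k) ≠ 0) ∧ ∑ k, s k = (0, 0)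

namespace DirichletAux

open scoped ENNReal

noncomputable def q (p : ℤ × ℤ → ℝ) (x : ℤ × ℤ) : ℝ≥0∞ := ENNReal.ofReal (p x)

open Classical in
noncomputable def A (p : ℤ × ℤ → ℝ) (Λ : Finset (ℤ × ℤ)) (i : ℤ × ℤ) (n : ℕ) : ℝ≥0∞ :=
  ∑' s : Fin n → ℤ × ℤ,
    if (∀ k < n, pathPos i s k ∈ Λ ∧ pathPos i s k ≠ (0, 0)) ∧ pathPos i s n = (0, 0)
    then ∏ k, q p (s k) else 0

noncomputable def hE (p : ℤ × ℤ → ℝ) (Λ : Finset (ℤ × ℤ)) (i : ℤ × ℤ) : ℝ≥0∞ :=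
  ∑' n, A p Λ i n

lemma pathPos_zero (i : ℤ × ℤ) {n : ℕ} (s : Fin n → ℤ × ℤ) : pathPos i s 0 = i := by
  simp [pathPos]

lemma pathPos_cons (i a : ℤ × ℤ) {n : ℕ} (t : Fin n → ℤ × ℤ) (k : ℕ) :
    pathPos i (Fin.cons a t) (k + 1) = pathPos (i + a) t k := by
  unfold pathPos
  rw [Fin.sum_univ_succ]
  simp only [Fin.cons_zero, Fin.cons_succ, Fin.val_succ, Fin.val_zero,
    Nat.succ_lt_succ_iff, Nat.zero_lt_succ, if_true]
  rw [← add_assoc]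

lemma forall_lt_succ_iff {P : ℕ → Prop} (n : ℕ) :
    (∀ k < n + 1, P k) ↔ P 0 ∧ ∀ k < n, P (k + 1) := by
  constructor
  · intro h; exact ⟨h 0 (Nat.succ_pos n), fun k hk => h (k + 1) (Nat.succ_lt_succ hk)⟩
  · rintro ⟨h0, h⟩ k hk
    cases k with
    | zero => exact h0
    | succ m => exact h m (Nat.lt_of_succ_lt_succ hk)

lemma A_zero (p : ℤ × ℤ → ℝ) (Λ : Finset (ℤ × ℤ)) (i : ℤ × ℤ) :
    A p Λ i 0 = if i = (0, 0) then 1 else 0 := by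
  classical
  unfold A
  rw [tsum_eq_single (fun x : Fin 0 => (0 : ℤ × ℤ))
    (fun b hb => (hb (funext fun x => x.elim0)).elim)]
  simp [pathPos_zero]

lemma A_succ (p : ℤ × ℤ → ℝ) (Λ : Finset (ℤ × ℤ)) (i : ℤ × ℤ) (n : ℕ) :
    A p Λ i (n + 1) =
      if i ∈ Λ ∧ i ≠ (0, 0) then ∑' a, q p a * A p Λ (i + a) n else 0 := by
  classical
  unfold A
  rw [← (Fin.consEquiv (fun _ : Fin (n + 1) => ℤ × ℤ)).tsum_eq]
  simp only [Fin.consEquiv_apply]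
  rw [ENNReal.tsum_prod']
  have key : ∀ (a : ℤ × ℤ) (t : Fin n → ℤ × ℤ),
      (if (∀ k < n + 1, pathPos i (Fin.cons a t) k ∈ Λ ∧ pathPos i (Fin.cons a t) k ≠ (0, 0)) ∧
          pathPos i (Fin.cons a t) (n + 1) = (0, 0)
        then ∏ k, q p (Fin.cons (α := fun _ => ℤ × ℤ) a t k) else 0)
      = if i ∈ Λ ∧ i ≠ (0, 0) then
          q p a * (if (∀ k < n, pathPos (i + a) t k ∈ Λ ∧ pathPos (i + a) t k ≠ (0, 0)) ∧
              pathPos (i + a) t n = (0, 0) then ∏ k, q p (t k) else 0)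
        else 0 := by
    intro a t
    have hcond : ((∀ k < n + 1, pathPos i (Fin.cons a t) k ∈ Λ ∧ pathPos i (Fin.cons a t) k ≠ (0, 0)) ∧
          pathPos i (Fin.cons a t) (n + 1) = (0, 0))
        ↔ ((i ∈ Λ ∧ i ≠ (0, 0)) ∧
          ((∀ k < n, pathPos (i + a) t k ∈ Λ ∧ pathPos (i + a) t k ≠ (0, 0)) ∧
            pathPos (i + a) t n = (0, 0))) := by
      rw [forall_lt_succ_iff]
      simp only [pathPos_zero, pathPos_cons]
      tauto
    have hprod : (∏ k, q p (Fin.cons (α := fun _ => ℤ × ℤ) a t k)) = q p a * ∏ k, q p (t k) := by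
      rw [Fin.prod_univ_succ]; simp
    rw [hprod]
    by_cases h : i ∈ Λ ∧ i ≠ (0, 0)
    · by_cases h' : (∀ k < n, pathPos (i + a) t k ∈ Λ ∧ pathPos (i + a) t k ≠ (0, 0)) ∧
          pathPos (i + a) t n = (0, 0)
      · rw [if_pos (hcond.mpr ⟨h, h'⟩), if_pos h, if_pos h']
      · rw [if_neg (fun hc => h' (hcond.mp hc).2), if_pos h, if_neg h', mul_zero]
    · rw [if_neg (fun hc => h (hcond.mp hc).1), if_neg h]
  calc ∑' (a : ℤ × ℤ) (t : Fin n → ℤ × ℤ),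
        (if (∀ k < n + 1, pathPos i (Fin.cons a t) k ∈ Λ ∧ pathPos i (Fin.cons a t) k ≠ (0, 0)) ∧
          pathPos i (Fin.cons a t) (n + 1) = (0, 0) then ∏ k, q p (Fin.cons (α := fun _ => ℤ × ℤ) a t k) else 0)
      = ∑' (a : ℤ × ℤ) (t : Fin n → ℤ × ℤ),
          (if i ∈ Λ ∧ i ≠ (0, 0) then
            q p a * (if (∀ k < n, pathPos (i + a) t k ∈ Λ ∧ pathPos (i + a) t k ≠ (0, 0)) ∧
              pathPos (i + a) t n = (0, 0) then ∏ k, q p (t k) else 0) else 0) := by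
        exact tsum_congr fun a => tsum_congr fun t => key a t
    _ = if i ∈ Λ ∧ i ≠ (0, 0) then ∑' a, q p a * A p Λ (i + a) n else 0 := by
        by_cases h : i ∈ Λ ∧ i ≠ (0, 0)
        · rw [if_pos h]
          refine tsum_congr fun a => ?_
          rw [tsum_congr fun t => if_pos h, ENNReal.tsum_mul_left]
          rfl
        · rw [if_neg h]
          simp only [if_neg h, tsum_zero]

lemma q_sum (p : ℤ × ℤ → ℝ) (hp : IsNiceKernel p) : ∑' x, q p x = 1 := by
  unfold q
  rw [← ENNReal.ofReal_tsum_of_nonneg hp.nonneg hp.total.summable, hp.total.tsum_eq,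
    ENNReal.ofReal_one]

lemma sum_A_le_one (p : ℤ × ℤ → ℝ) (hp : IsNiceKernel p) (Λ : Finset (ℤ × ℤ)) (M : ℕ) :
    ∀ i, ∑ n ∈ Finset.range (M + 1), A p Λ i n ≤ 1 := by
  induction M with
  | zero =>
      intro i
      rw [Finset.sum_range_one, A_zero]
      split <;> simp
  | succ M ih =>
      intro i
      rw [Finset.sum_range_succ', A_zero]
      have h1 : ∑ n ∈ Finset.range (M + 1), A p Λ i (n + 1)
          ≤ if i ∈ Λ ∧ i ≠ (0, 0) then (1 : ℝ≥0∞) else 0 := by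
        by_cases h : i ∈ Λ ∧ i ≠ (0, 0)
        · rw [if_pos h]
          calc ∑ n ∈ Finset.range (M + 1), A p Λ i (n + 1)
              = ∑ n ∈ Finset.range (M + 1), ∑' a, q p a * A p Λ (i + a) n :=
                Finset.sum_congr rfl fun n _ => by rw [A_succ, if_pos h]
            _ = ∑' a, ∑ n ∈ Finset.range (M + 1), q p a * A p Λ (i + a) n :=
                (Summable.tsum_finsetSum (fun n _ => ENNReal.summable)).symm
            _ = ∑' a, q p a * ∑ n ∈ Finset.range (M + 1), A p Λ (i + a) n :=
                tsum_congr fun a => (Finset.mul_sum _ _ _).symm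
            _ ≤ ∑' a, q p a * 1 :=
                ENNReal.tsum_le_tsum fun a => mul_le_mul_right (ih (i + a)) _
            _ = ∑' a, q p a := tsum_congr fun a => mul_one _
            _ = 1 := q_sum p hp
        · rw [if_neg h]
          calc ∑ n ∈ Finset.range (M + 1), A p Λ i (n + 1)
              = ∑ n ∈ Finset.range (M + 1), (0 : ℝ≥0∞) :=
                Finset.sum_congr rfl fun n _ => by rw [A_succ, if_neg h]
            _ ≤ 0 := le_of_eq Finset.sum_const_zero
      by_cases h0 : i = (0, 0)
      · have h2 : ¬(i ∈ Λ ∧ i ≠ (0, 0)) := fun hc => hc.2 h0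
        rw [if_neg h2] at h1
        rw [if_pos h0]
        calc ∑ k ∈ Finset.range (M + 1), A p Λ i (k + 1) + 1 ≤ 0 + 1 := add_le_add h1 le_rfl
          _ = 1 := zero_add 1
      · rw [if_neg h0, add_zero]
        exact h1.trans (by split <;> simp)

lemma hE_le_one (p : ℤ × ℤ → ℝ) (hp : IsNiceKernel p) (Λ : Finset (ℤ × ℤ)) (i : ℤ × ℤ) :
    hE p Λ i ≤ 1 := by
  rw [hE, ENNReal.tsum_eq_iSup_sum]
  apply iSup_le
  intro s
  calc ∑ n ∈ s, A p Λ i n ≤ ∑ n ∈ Finset.range (s.sup id + 1), A p Λ i n := by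
        apply Finset.sum_le_sum_of_subset
        intro n hn
        exact Finset.mem_range.mpr (Nat.lt_succ_of_le (Finset.le_sup (f := id) hn))
    _ ≤ 1 := sum_A_le_one p hp Λ _ i

lemma hE_ne_top (p : ℤ × ℤ → ℝ) (hp : IsNiceKernel p) (Λ : Finset (ℤ × ℤ)) (i : ℤ × ℤ) :
    hE p Λ i ≠ ⊤ :=
  ne_top_of_le_ne_top ENNReal.one_ne_top (hE_le_one p hp Λ i)

lemma A_ne_top (p : ℤ × ℤ → ℝ) (hp : IsNiceKernel p) (Λ : Finset (ℤ × ℤ)) (i : ℤ × ℤ) (n : ℕ) :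
    A p Λ i n ≠ ⊤ :=
  ne_top_of_le_ne_top (hE_ne_top p hp Λ i) (ENNReal.le_tsum n)

lemma hE_eq (p : ℤ × ℤ → ℝ) (Λ : Finset (ℤ × ℤ)) (i : ℤ × ℤ) :
    hE p Λ i = (if i = (0, 0) then 1 else 0)
      + (if i ∈ Λ ∧ i ≠ (0, 0) then ∑' a, q p a * hE p Λ (i + a) else 0) := by
  rw [hE, tsum_eq_zero_add' ENNReal.summable, A_zero]
  congr 1
  rw [tsum_congr fun n => A_succ p Λ i n]
  by_cases h : i ∈ Λ ∧ i ≠ (0, 0)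
  · rw [if_pos h, tsum_congr fun n => if_pos (c := i ∈ Λ ∧ i ≠ (0, 0)) h, ENNReal.tsum_comm]
    exact tsum_congr fun a => by rw [ENNReal.tsum_mul_left]; rfl
  · rw [if_neg h, tsum_congr fun n => if_neg (c := i ∈ Λ ∧ i ≠ (0, 0)) h, tsum_zero]

end DirichletAux
namespace DirichletAux

lemma p_le_one (p : ℤ × ℤ → ℝ) (hp : IsNiceKernel p) (x : ℤ × ℤ) : p x ≤ 1 :=
  le_hasSum hp.total x fun y _ => hp.nonneg y

lemma hitProb_eq (p : ℤ × ℤ → ℝ) (hp : IsNiceKernel p) (Λ : Finset (ℤ × ℤ)) (i : ℤ × ℤ) :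
    hitProb p Λ i = (hE p Λ i).toReal := by
  classical
  rw [hitProb, hE, ENNReal.tsum_toReal_eq (fun n => A_ne_top p hp Λ i n)]
  refine tsum_congr fun n => ?_
  rw [A, ENNReal.tsum_toReal_eq]
  · refine tsum_congr fun s => ?_
    by_cases hc : (∀ k < n, pathPos i s k ∈ Λ ∧ pathPos i s k ≠ (0, 0)) ∧
        pathPos i s n = (0, 0)
    · rw [if_pos hc, if_pos hc, ENNReal.toReal_prod]
      exact Finset.prod_congr rfl fun k _ => (ENNReal.toReal_ofReal (hp.nonneg _)).symm
    · rw [if_neg hc, if_neg hc, ENNReal.toReal_zero]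
  · intro s
    split
    · exact ENNReal.prod_ne_top fun k _ => ENNReal.ofReal_ne_top
    · exact ENNReal.zero_ne_top

lemma hitProb_nonneg (p : ℤ × ℤ → ℝ) (hp : IsNiceKernel p) (Λ : Finset (ℤ × ℤ)) (i : ℤ × ℤ) :
    0 ≤ hitProb p Λ i := by
  rw [hitProb_eq p hp]; exact ENNReal.toReal_nonneg

lemma hitProb_origin (p : ℤ × ℤ → ℝ) (hp : IsNiceKernel p) (Λ : Finset (ℤ × ℤ))
    (h0 : (0, 0) ∈ Λ) : hitProb p Λ (0, 0) = 1 := by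
  rw [hitProb_eq p hp, hE_eq]
  simp

lemma hitProb_not_mem (p : ℤ × ℤ → ℝ) (hp : IsNiceKernel p) (Λ : Finset (ℤ × ℤ))
    (h0 : (0, 0) ∈ Λ) {i : ℤ × ℤ} (hi : i ∉ Λ) : hitProb p Λ i = 0 := by
  have hne : i ≠ (0, 0) := fun h => hi (h ▸ h0)
  rw [hitProb_eq p hp, hE_eq, if_neg hne, if_neg (fun hc => hi hc.1), add_zero,
    ENNReal.toReal_zero]

lemma hitProb_harmonic (p : ℤ × ℤ → ℝ) (hp : IsNiceKernel p) (Λ : Finset (ℤ × ℤ))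
    (h0 : (0, 0) ∈ Λ) {i : ℤ × ℤ} (hi : i ∈ Λ) (hne : i ≠ (0, 0)) :
    hitProb p Λ i = ∑ j ∈ Λ, p (i - j) * hitProb p Λ j := by
  have e1 : hE p Λ i = ∑' a, q p a * hE p Λ (i + a) := by
    rw [hE_eq, if_neg hne, if_pos ⟨hi, hne⟩, zero_add]
  calc hitProb p Λ i = (hE p Λ i).toReal := hitProb_eq p hp Λ i
    _ = ∑' a, (q p a * hE p Λ (i + a)).toReal := by
        rw [e1]
        exact ENNReal.tsum_toReal_eq
          (fun a => ENNReal.mul_ne_top ENNReal.ofReal_ne_top (hE_ne_top p hp Λ _))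
    _ = ∑' a, p a * hitProb p Λ (i + a) := by
        refine tsum_congr fun a => ?_
        rw [ENNReal.toReal_mul, q, ENNReal.toReal_ofReal (hp.nonneg a), ← hitProb_eq p hp]
    _ = ∑' j, p (j - i) * hitProb p Λ j := by
        rw [← (Equiv.addLeft i).tsum_eq (fun j => p (j - i) * hitProb p Λ j)]
        exact tsum_congr fun a => by simp [add_sub_cancel_left]
    _ = ∑ j ∈ Λ, p (j - i) * hitProb p Λ j := by
        refine tsum_eq_sum fun j hj => ?_
        rw [hitProb_not_mem p hp Λ h0 hj, mul_zero]
    _ = ∑ j ∈ Λ, p (i - j) * hitProb p Λ j := by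
        refine Finset.sum_congr rfl fun j _ => ?_
        rw [← neg_sub i j, hp.symm]

lemma hasSum_shift (p : ℤ × ℤ → ℝ) (hp : IsNiceKernel p) (i : ℤ × ℤ) :
    HasSum (fun j => p (i - j)) 1 := by
  have := (Equiv.subLeft i).hasSum_iff (f := p) (a := 1)
  exact this.mpr hp.total

lemma bdryWeight_eq (p : ℤ × ℤ → ℝ) (hp : IsNiceKernel p) (Λ : Finset (ℤ × ℤ)) (i : ℤ × ℤ) :
    bdryWeight p Λ i = 1 - ∑ j ∈ Λ, p (i - j) := by
  classical
  have hg : HasSum (fun j => if j ∈ Λ then p (i - j) else 0) (∑ j ∈ Λ, p (i - j)) := by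
    have := hasSum_sum_of_ne_finset_zero
      (f := fun j => if j ∈ Λ then p (i - j) else 0) (s := Λ) (L := SummationFilter.unconditional _) (fun b hb => if_neg hb)
    rwa [Finset.sum_congr rfl fun j hj => if_pos hj] at this
  have hf : HasSum (fun j => if j ∈ Λ then 0 else p (i - j)) (1 - ∑ j ∈ Λ, p (i - j)) := by
    have h := (hasSum_shift p hp i).sub hg
    have : (fun j => p (i - j) - if j ∈ Λ then p (i - j) else 0)
        = fun j => if j ∈ Λ then 0 else p (i - j) := by
      funext j; by_cases hj : j ∈ Λ <;> simp [hj]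
    rwa [this] at h
  rw [bdryWeight, hf.tsum_eq]

lemma bdryWeight_nonneg (p : ℤ × ℤ → ℝ) (hp : IsNiceKernel p) (Λ : Finset (ℤ × ℤ))
    (i : ℤ × ℤ) : 0 ≤ bdryWeight p Λ i := by
  rw [bdryWeight]
  refine tsum_nonneg fun j => ?_
  split
  · exact le_refl 0
  · exact hp.nonneg _

lemma bdryWeight_le_one (p : ℤ × ℤ → ℝ) (hp : IsNiceKernel p) (Λ : Finset (ℤ × ℤ))
    (i : ℤ × ℤ) : bdryWeight p Λ i ≤ 1 := by
  rw [bdryWeight_eq p hp]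
  have : 0 ≤ ∑ j ∈ Λ, p (i - j) := Finset.sum_nonneg fun j _ => hp.nonneg _
  linarith

lemma sum_in_le_one (p : ℤ × ℤ → ℝ) (hp : IsNiceKernel p) (Λ : Finset (ℤ × ℤ))
    (i : ℤ × ℤ) : ∑ j ∈ Λ, p (i - j) ≤ 1 := by
  have := bdryWeight_nonneg p hp Λ i
  rw [bdryWeight_eq p hp] at this
  linarith

lemma bdryWeight_eq_zero (p : ℤ × ℤ → ℝ) (Λ : Finset (ℤ × ℤ)) (i : ℤ × ℤ)
    (h : ∀ j ∉ Λ, p (i - j) = 0) : bdryWeight p Λ i = 0 := by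
  rw [bdryWeight]
  convert tsum_zero with j
  by_cases hj : j ∈ Λ <;> simp [hj, h]

end DirichletAux
namespace DirichletAux

noncomputable def En (p : ℤ × ℤ → ℝ) (Λ : Finset (ℤ × ℤ)) (f : ℤ × ℤ → ℝ) : ℝ :=
  (1 / 2) * ∑ i ∈ Λ, ∑ j ∈ Λ, p (i - j) * (f i - f j) ^ 2
    + ∑ i ∈ Λ, bdryWeight p Λ i * (f i) ^ 2

noncomputable def Bf (p : ℤ × ℤ → ℝ) (Λ : Finset (ℤ × ℤ)) (f g : ℤ × ℤ → ℝ) : ℝ :=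
  (1 / 2) * ∑ i ∈ Λ, ∑ j ∈ Λ, p (i - j) * (f i - f j) * (g i - g j)
    + ∑ i ∈ Λ, bdryWeight p Λ i * f i * g i

lemma En_add (p : ℤ × ℤ → ℝ) (Λ : Finset (ℤ × ℤ)) (f u : ℤ × ℤ → ℝ) :
    En p Λ (fun x => f x + u x) = En p Λ f + 2 * Bf p Λ f u + En p Λ u := by
  unfold En Bf
  have e1 : ∑ i ∈ Λ, ∑ j ∈ Λ, p (i - j) * ((f i + u i) - (f j + u j)) ^ 2
      = ∑ i ∈ Λ, ∑ j ∈ Λ, (p (i - j) * (f i - f j) ^ 2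
        + (2 * (p (i - j) * (f i - f j) * (u i - u j)) + p (i - j) * (u i - u j) ^ 2)) :=
    Finset.sum_congr rfl fun i _ => Finset.sum_congr rfl fun j _ => by ring
  have e2 : ∑ i ∈ Λ, bdryWeight p Λ i * (f i + u i) ^ 2
      = ∑ i ∈ Λ, (bdryWeight p Λ i * (f i) ^ 2
        + (2 * (bdryWeight p Λ i * f i * u i) + bdryWeight p Λ i * (u i) ^ 2)) :=
    Finset.sum_congr rfl fun i _ => by ring
  rw [e1, e2]
  simp only [Finset.sum_add_distrib, ← Finset.mul_sum]
  ring

lemma Bf_eq (p : ℤ × ℤ → ℝ) (hsymm : ∀ x, p (-x) = p x) (Λ : Finset (ℤ × ℤ))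
    (h u : ℤ × ℤ → ℝ) :
    Bf p Λ h u = ∑ i ∈ Λ, u i * ((∑ j ∈ Λ, p (i - j) * (h i - h j)) + bdryWeight p Λ i * h i) := by
  unfold Bf
  have e1 : ∑ i ∈ Λ, ∑ j ∈ Λ, p (i - j) * (h i - h j) * (u i - u j)
      = ∑ i ∈ Λ, ∑ j ∈ Λ, (p (i - j) * (h i - h j) * u i - p (i - j) * (h i - h j) * u j) :=
    Finset.sum_congr rfl fun i _ => Finset.sum_congr rfl fun j _ => by ring
  have swap : ∑ i ∈ Λ, ∑ j ∈ Λ, p (i - j) * (h i - h j) * u j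
      = ∑ i ∈ Λ, ∑ j ∈ Λ, (-(p (i - j) * (h i - h j) * u i)) := by
    rw [Finset.sum_comm]
    refine Finset.sum_congr rfl fun x _ => Finset.sum_congr rfl fun y _ => ?_
    rw [← hsymm (x - y), neg_sub]
    ring
  rw [e1]
  simp only [Finset.sum_sub_distrib]
  rw [swap]
  simp only [Finset.sum_neg_distrib]
  have e3 : ∑ i ∈ Λ, ∑ j ∈ Λ, p (i - j) * (h i - h j) * u i
      = ∑ i ∈ Λ, u i * ∑ j ∈ Λ, p (i - j) * (h i - h j) := by
    refine Finset.sum_congr rfl fun i _ => ?_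
    rw [Finset.mul_sum]
    exact Finset.sum_congr rfl fun j _ => by ring
  rw [e3]
  have e4 : ∑ i ∈ Λ, u i * ((∑ j ∈ Λ, p (i - j) * (h i - h j)) + bdryWeight p Λ i * h i)
      = ∑ i ∈ Λ, (u i * ∑ j ∈ Λ, p (i - j) * (h i - h j) + bdryWeight p Λ i * h i * u i) :=
    Finset.sum_congr rfl fun i _ => by ring
  rw [e4, Finset.sum_add_distrib]
  ring

lemma Bf_hitProb_zero (p : ℤ × ℤ → ℝ) (hp : IsNiceKernel p) (Λ : Finset (ℤ × ℤ))
    (h0 : (0, 0) ∈ Λ) (u : ℤ × ℤ → ℝ) (hu : u (0, 0) = 0) :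
    Bf p Λ (hitProb p Λ) u = 0 := by
  rw [Bf_eq p hp.symm]
  refine Finset.sum_eq_zero fun i hi => ?_
  by_cases hne : i = (0, 0)
  · rw [hne, hu, zero_mul]
  · have harm := hitProb_harmonic p hp Λ h0 hi hne
    have expand : ∑ j ∈ Λ, p (i - j) * (hitProb p Λ i - hitProb p Λ j)
        = (∑ j ∈ Λ, p (i - j)) * hitProb p Λ i - ∑ j ∈ Λ, p (i - j) * hitProb p Λ j := by
      rw [Finset.sum_mul, ← Finset.sum_sub_distrib]
      exact Finset.sum_congr rfl fun j _ => by ring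
    have hs : ∑ j ∈ Λ, p (i - j) = 1 - bdryWeight p Λ i := by
      rw [bdryWeight_eq p hp]; ring
    have : (∑ j ∈ Λ, p (i - j) * (hitProb p Λ i - hitProb p Λ j))
        + bdryWeight p Λ i * hitProb p Λ i = 0 := by
      rw [expand, hs, ← harm]; ring
    rw [this, mul_zero]

lemma En_nonneg (p : ℤ × ℤ → ℝ) (hp : IsNiceKernel p) (Λ : Finset (ℤ × ℤ))
    (u : ℤ × ℤ → ℝ) : 0 ≤ En p Λ u := by
  unfold En
  have t1 : (0:ℝ) ≤ ∑ i ∈ Λ, ∑ j ∈ Λ, p (i - j) * (u i - u j) ^ 2 :=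
    Finset.sum_nonneg fun i _ => Finset.sum_nonneg fun j _ =>
      mul_nonneg (hp.nonneg _) (sq_nonneg _)
  have t2 : (0:ℝ) ≤ ∑ i ∈ Λ, bdryWeight p Λ i * (u i) ^ 2 :=
    Finset.sum_nonneg fun i _ => mul_nonneg (bdryWeight_nonneg p hp Λ i) (sq_nonneg _)
  linarith

lemma En_le (p : ℤ × ℤ → ℝ) (hp : IsNiceKernel p) (Λ : Finset (ℤ × ℤ))
    (h0 : (0, 0) ∈ Λ) (g : ℤ × ℤ → ℝ) (hg : g (0, 0) = 1) :
    En p Λ (hitProb p Λ) ≤ En p Λ g := by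
  set u : ℤ × ℤ → ℝ := fun x => g x - hitProb p Λ x with hu_def
  have hu : u (0, 0) = 0 := by
    simp only [hu_def, hg, hitProb_origin p hp Λ h0]; ring
  have hgeq : g = fun x => hitProb p Λ x + u x := funext fun x => by simp [hu_def]
  calc En p Λ (hitProb p Λ)
      ≤ En p Λ (hitProb p Λ) + En p Λ u := le_add_of_nonneg_right (En_nonneg p hp Λ u)
    _ = En p Λ (hitProb p Λ) + 2 * Bf p Λ (hitProb p Λ) u + En p Λ u := by
        rw [Bf_hitProb_zero p hp Λ h0 u hu]; ring
    _ = En p Λ (fun x => hitProb p Λ x + u x) := (En_add p Λ (hitProb p Λ) u).symm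
    _ = En p Λ g := by rw [← hgeq]

end DirichletAux
namespace DirichletAux

def nu (i : ℤ × ℤ) : ℤ := |i.1| ⊔ |i.2|

noncomputable def mu (i : ℤ × ℤ) : ℝ := max ((nu i : ℤ) : ℝ) 1

noncomputable def gtest (N : ℕ) (i : ℤ × ℤ) : ℝ :=
  max 0 (1 - Real.log (mu i) / Real.log N)

lemma nu_nonneg (i : ℤ × ℤ) : 0 ≤ nu i :=
  le_trans (abs_nonneg _) (le_max_left _ _)

lemma one_le_mu (i : ℤ × ℤ) : 1 ≤ mu i := le_max_right _ _

lemma mu_pos (i : ℤ × ℤ) : 0 < mu i := lt_of_lt_of_le one_pos (one_le_mu i)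

lemma mem_LN (N : ℕ) (i : ℤ × ℤ) : i ∈ ΛN N ↔ nu i ≤ (N : ℤ) := by
  unfold ΛN nu
  rw [Finset.mem_product, Finset.mem_Icc, Finset.mem_Icc, max_le_iff, abs_le, abs_le]

lemma nu_add (a b : ℤ × ℤ) : nu (a + b) ≤ nu a + nu b := by
  unfold nu
  refine max_le ?_ ?_
  · calc |(a + b).1| = |a.1 + b.1| := rfl
      _ ≤ |a.1| + |b.1| := abs_add_le _ _
      _ ≤ _ := add_le_add (le_max_left _ _) (le_max_left _ _)
  · calc |(a + b).2| = |a.2 + b.2| := rfl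
      _ ≤ |a.2| + |b.2| := abs_add_le _ _
      _ ≤ _ := add_le_add (le_max_right _ _) (le_max_right _ _)

lemma nu_neg (a : ℤ × ℤ) : nu (-a) = nu a := by
  unfold nu
  have h1 : (-a).1 = -a.1 := rfl
  have h2 : (-a).2 = -a.2 := rfl
  rw [h1, h2, abs_neg, abs_neg]

lemma nu_le_add (i j : ℤ × ℤ) : nu i ≤ nu j + nu (i - j) := by
  have := nu_add j (i - j)
  rwa [add_comm j, sub_add_cancel] at this

lemma card_LN (m : ℕ) : (ΛN m).card = (2 * m + 1) ^ 2 := by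
  rw [ΛN, Finset.card_product, Int.card_Icc]
  have h : ((m : ℤ) + 1 - -(m : ℤ)).toNat = 2 * m + 1 := by omega
  rw [h]; ring

lemma LN_mono {m m' : ℕ} (h : m ≤ m') : ΛN m ⊆ ΛN m' := by
  intro i hi
  rw [mem_LN] at *
  exact le_trans hi (by exact_mod_cast h)

lemma harmonic_le (N : ℕ) : ∑ i ∈ Finset.range N, (1 / ((i : ℝ) + 1)) ≤ 1 + Real.log N := by
  induction N with
  | zero => simp
  | succ N ih =>
      rcases Nat.eq_zero_or_pos N with hN | hN
      · subst hN
        norm_num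
      · have hNpos : (0 : ℝ) < N := by exact_mod_cast hN
        have h1 : Real.log (N : ℝ) - Real.log ((N : ℝ) + 1) ≤ -(1 / ((N : ℝ) + 1)) := by
          have hx : (0 : ℝ) < (N : ℝ) / ((N : ℝ) + 1) := by positivity
          have hlog := Real.log_le_sub_one_of_pos hx
          rw [Real.log_div (ne_of_gt hNpos) (by positivity)] at hlog
          have heq : (N : ℝ) / ((N : ℝ) + 1) - 1 = -(1 / ((N : ℝ) + 1)) := by field_simp; ring
          linarith
        rw [Finset.sum_range_succ]
        have hcast : ((N + 1 : ℕ) : ℝ) = (N : ℝ) + 1 := by push_cast; ring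
        rw [hcast]
        linarith

lemma sum_inv_mu_sq_le (N : ℕ) :
    ∑ i ∈ ΛN N, 1 / (mu i) ^ 2 ≤ 16 + 12 * Real.log N := by
  classical
  have hmaps : ∀ i ∈ ΛN N, (nu i).toNat ∈ Finset.range (N + 1) := by
    intro i hi
    rw [Finset.mem_range]
    rw [mem_LN] at hi
    omega
  rw [← Finset.sum_fiberwise_of_maps_to hmaps]
  have fib_bound : ∀ m ∈ Finset.range (N + 1),
      ∑ i ∈ (ΛN N).filter (fun i => (nu i).toNat = m), 1 / (mu i) ^ 2
        ≤ if m = 0 then (1 : ℝ) else 12 / (m : ℝ) := by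
    intro m _
    have hval : ∀ i ∈ (ΛN N).filter (fun i => (nu i).toNat = m),
        1 / (mu i) ^ 2 = 1 / (max (m : ℝ) 1) ^ 2 := by
      intro i hi
      rw [Finset.mem_filter] at hi
      have h0 : 0 ≤ nu i := nu_nonneg i
      have h1 : nu i = ((m : ℕ) : ℤ) := by
        have := hi.2
        omega
      rw [mu, h1]
      norm_num
    rw [Finset.sum_congr rfl hval, Finset.sum_const, nsmul_eq_mul]
    rcases Nat.eq_zero_or_pos m with h0 | h0
    · subst h0
      rw [if_pos rfl]
      have hsub : (ΛN N).filter (fun i => (nu i).toNat = 0) ⊆ {((0 : ℤ), (0 : ℤ))} := by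
        intro i hi
        rw [Finset.mem_filter] at hi
        have hnn := nu_nonneg i
        have h2 : nu i = 0 := by omega
        have ha : |i.1| ≤ 0 := le_trans (le_max_left _ _) (le_of_eq h2)
        have hb : |i.2| ≤ 0 := le_trans (le_max_right _ _) (le_of_eq h2)
        rw [abs_nonpos_iff] at ha hb
        rw [Finset.mem_singleton]
        exact Prod.ext ha hb
      have hcard : ((ΛN N).filter (fun i => (nu i).toNat = 0)).card ≤ 1 :=
        le_trans (Finset.card_le_card hsub) (by simp)
      have hcard' : (((ΛN N).filter (fun i => (nu i).toNat = 0)).card : ℝ) ≤ 1 := by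
        exact_mod_cast hcard
      have : (1 : ℝ) / (max ((0:ℕ) : ℝ) 1) ^ 2 = 1 := by norm_num
      rw [this, mul_one]
      exact hcard'
    · rw [if_neg (by omega)]
      obtain ⟨k, rfl⟩ : ∃ k, m = k + 1 := ⟨m - 1, by omega⟩
      have hmax : max ((k + 1 : ℕ) : ℝ) 1 = ((k + 1 : ℕ) : ℝ) :=
        max_eq_left (by exact_mod_cast Nat.one_le_iff_ne_zero.mpr (by omega))
      rw [hmax]
      have hsub : (ΛN N).filter (fun i => (nu i).toNat = k + 1) ⊆ ΛN (k + 1) \ ΛN k := by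
        intro i hi
        rw [Finset.mem_filter] at hi
        have hnn := nu_nonneg i
        have h2 : nu i = (k : ℤ) + 1 := by have := hi.2; omega
        rw [Finset.mem_sdiff, mem_LN, mem_LN]
        constructor
        · push_cast; omega
        · push_cast; omega
      have hcard : ((ΛN N).filter (fun i => (nu i).toNat = k + 1)).card
          ≤ (ΛN (k + 1)).card - (ΛN k).card :=
        le_trans (Finset.card_le_card hsub)
          (le_of_eq (Finset.card_sdiff_of_subset (LN_mono (by omega))))
      have hle : (ΛN k).card ≤ (ΛN (k + 1)).card := Finset.card_le_card (LN_mono (by omega))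
      have hcardR : (((ΛN N).filter (fun i => (nu i).toNat = k + 1)).card : ℝ)
          ≤ ((ΛN (k + 1)).card : ℝ) - ((ΛN k).card : ℝ) := by
        have := hcard
        have h3 : (((ΛN (k+1)).card - (ΛN k).card : ℕ) : ℝ)
            = ((ΛN (k + 1)).card : ℝ) - ((ΛN k).card : ℝ) := Nat.cast_sub hle
        calc (((ΛN N).filter (fun i => (nu i).toNat = k + 1)).card : ℝ)
            ≤ (((ΛN (k+1)).card - (ΛN k).card : ℕ) : ℝ) := by exact_mod_cast this
          _ = _ := h3
      rw [card_LN, card_LN] at hcardR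
      have hcard8 : (((ΛN N).filter (fun i => (nu i).toNat = k + 1)).card : ℝ)
          ≤ 8 * ((k : ℝ) + 1) + 4 := by
        have e1 : (((2 * (k + 1) + 1) ^ 2 : ℕ) : ℝ) = (2 * ((k : ℝ) + 1) + 1) ^ 2 := by
          push_cast; ring
        have e2 : (((2 * k + 1) ^ 2 : ℕ) : ℝ) = (2 * (k : ℝ) + 1) ^ 2 := by
          push_cast; ring
        rw [e1, e2] at hcardR
        nlinarith [hcardR]
      have hk1 : (1 : ℝ) ≤ ((k + 1 : ℕ) : ℝ) := by exact_mod_cast Nat.one_le_iff_ne_zero.mpr (by omega)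
      have hkpos : (0 : ℝ) < ((k + 1 : ℕ) : ℝ) := lt_of_lt_of_le one_pos hk1
      have hcast : ((k + 1 : ℕ) : ℝ) = (k : ℝ) + 1 := by push_cast; ring
      rw [hcast] at hk1 hkpos ⊢
      calc (((ΛN N).filter (fun i => (nu i).toNat = k + 1)).card : ℝ) * (1 / ((k:ℝ) + 1) ^ 2)
          ≤ (8 * ((k : ℝ) + 1) + 4) * (1 / ((k:ℝ) + 1) ^ 2) := by
            apply mul_le_mul_of_nonneg_right hcard8
            positivity
        _ ≤ 12 / ((k : ℝ) + 1) := by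
            rw [mul_one_div, div_le_div_iff₀ (by positivity) hkpos]
            nlinarith [hk1]
  calc ∑ m ∈ Finset.range (N + 1),
        ∑ i ∈ (ΛN N).filter (fun i => (nu i).toNat = m), 1 / (mu i) ^ 2
      ≤ ∑ m ∈ Finset.range (N + 1), (if m = 0 then (1 : ℝ) else 12 / (m : ℝ)) :=
        Finset.sum_le_sum fib_bound
    _ = 1 + ∑ i ∈ Finset.range N, 12 / ((i : ℝ) + 1) := by
        rw [Finset.sum_range_succ']
        simp only [Nat.succ_ne_zero, if_false, if_pos rfl]
        push_cast
        ring
    _ = 1 + 12 * ∑ i ∈ Finset.range N, 1 / ((i : ℝ) + 1) := by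
        rw [Finset.mul_sum]
        congr 1
        refine Finset.sum_congr rfl fun i _ => by ring
    _ ≤ 1 + 12 * (1 + Real.log N) := by
        have := harmonic_le N
        linarith
    _ ≤ 16 + 12 * Real.log N := by linarith

end DirichletAux
namespace DirichletAux

lemma log_N_pos (N : ℕ) (hN : 2 ≤ N) : 0 < Real.log N :=
  Real.log_pos (by exact_mod_cast Nat.lt_of_lt_of_le one_lt_two hN)

lemma log_N_half (N : ℕ) (hN : 2 ≤ N) : (1 : ℝ) / 2 ≤ Real.log N := by
  have h1 : Real.log 2 ≤ Real.log N := by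
    apply Real.log_le_log (by norm_num)
    exact_mod_cast hN
  have h2 := Real.log_two_gt_d9
  linarith

lemma gtest_nonneg (N : ℕ) (i : ℤ × ℤ) : 0 ≤ gtest N i := le_max_left _ _

lemma gtest_le_one (N : ℕ) (hN : 2 ≤ N) (i : ℤ × ℤ) : gtest N i ≤ 1 := by
  apply max_le zero_le_one
  have : 0 ≤ Real.log (mu i) / Real.log N :=
    div_nonneg (Real.log_nonneg (one_le_mu i)) (log_N_pos N hN).le
  linarith

lemma gtest_origin (N : ℕ) : gtest N ((0 : ℤ), (0 : ℤ)) = 1 := by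
  unfold gtest mu
  have h : nu ((0 : ℤ), (0 : ℤ)) = 0 := by simp [nu]
  rw [h]
  norm_num

lemma gtest_lip (N : ℕ) (hN : 2 ≤ N) (i j : ℤ × ℤ) :
    |gtest N i - gtest N j| ≤ |Real.log (mu i) - Real.log (mu j)| / Real.log N := by
  have hL := log_N_pos N hN
  unfold gtest
  rw [max_comm 0 (1 - Real.log (mu i) / Real.log N),
    max_comm 0 (1 - Real.log (mu j) / Real.log N)]
  calc |(1 - Real.log (mu i) / Real.log N) ⊔ 0 - (1 - Real.log (mu j) / Real.log N) ⊔ 0|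
      ≤ |(1 - Real.log (mu i) / Real.log N) - (1 - Real.log (mu j) / Real.log N)| :=
        abs_max_sub_max_le_abs _ _ _
    _ = |Real.log (mu i) - Real.log (mu j)| / Real.log N := by
        have he : (1 - Real.log (mu i) / Real.log N) - (1 - Real.log (mu j) / Real.log N)
            = (Real.log (mu j) - Real.log (mu i)) / Real.log N := by
          field_simp
          ring
        rw [he, abs_div, abs_of_pos hL, abs_sub_comm]

lemma abs_log_sub_le {x y d : ℝ} (hx : 1 ≤ x) (hy : 1 ≤ y) (hxy : x ≤ y + d)
    (hyx : y ≤ x + d) : |Real.log x - Real.log y| ≤ d / min x y := by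
  have hx0 : 0 < x := lt_of_lt_of_le one_pos hx
  have hy0 : 0 < y := lt_of_lt_of_le one_pos hy
  rcases le_total x y with h | h
  · have hlog : Real.log x ≤ Real.log y := Real.log_le_log hx0 h
    rw [abs_of_nonpos (by linarith), min_eq_left h]
    have h1 : Real.log y - Real.log x = Real.log (y / x) :=
      (Real.log_div (ne_of_gt hy0) (ne_of_gt hx0)).symm
    have h2 : Real.log (y / x) ≤ y / x - 1 := Real.log_le_sub_one_of_pos (by positivity)
    have h3 : y / x - 1 = (y - x) / x := by field_simp
    have h4 : (y - x) / x ≤ d / x := by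
      apply div_le_div_of_nonneg_right ?_ hx0.le
      linarith
    linarith
  · have hlog : Real.log y ≤ Real.log x := Real.log_le_log hy0 h
    rw [abs_of_nonneg (by linarith), min_eq_right h]
    have h1 : Real.log x - Real.log y = Real.log (x / y) :=
      (Real.log_div (ne_of_gt hx0) (ne_of_gt hy0)).symm
    have h2 : Real.log (x / y) ≤ x / y - 1 := Real.log_le_sub_one_of_pos (by positivity)
    have h3 : x / y - 1 = (x - y) / y := by field_simp
    have h4 : (x - y) / y ≤ d / y := by
      apply div_le_div_of_nonneg_right ?_ hy0.le
      linarith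
    linarith

lemma log_mu_diff_le (K : ℕ) (hK1 : 1 ≤ K) {i j : ℤ × ℤ} (hstep : nu (i - j) ≤ (K : ℤ)) :
    |Real.log (mu i) - Real.log (mu j)|
      ≤ (2 * K * Real.log (3 * K) + 2 * K) / mu i := by
  have hKR : (1 : ℝ) ≤ (K : ℝ) := by exact_mod_cast hK1
  have hstepR : (nu (i - j) : ℝ) ≤ (K : ℝ) := by exact_mod_cast hstep
  have hnuji : nu (j - i) = nu (i - j) := by rw [← neg_sub i j, nu_neg]
  have hji : nu j ≤ nu i + (K : ℤ) := le_trans (nu_le_add j i) (by rw [hnuji]; omega)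
  have hij : nu i ≤ nu j + (K : ℤ) := le_trans (nu_le_add i j) (by omega)
  have hlog3K : 0 ≤ Real.log (3 * K) := Real.log_nonneg (by linarith)
  have hmui : 0 < mu i := mu_pos i
  by_cases hsm : nu i ≤ 2 * (K : ℤ)
  · -- small region
    have hsmR : ((nu i : ℤ) : ℝ) ≤ 2 * K := by exact_mod_cast hsm
    have hmui2K : mu i ≤ 2 * K := max_le hsmR (by linarith)
    have hnujR : ((nu j : ℤ) : ℝ) ≤ 3 * K := by
      have : nu j ≤ 3 * (K : ℤ) := by omega
      exact_mod_cast this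
    have hmuj3K : mu j ≤ 3 * K := max_le hnujR (by linarith)
    have hlogi : Real.log (mu i) ≤ Real.log (3 * K) :=
      Real.log_le_log (mu_pos i) (by linarith)
    have hlogj : Real.log (mu j) ≤ Real.log (3 * K) :=
      Real.log_le_log (mu_pos j) hmuj3K
    have hlogi0 : 0 ≤ Real.log (mu i) := Real.log_nonneg (one_le_mu i)
    have hlogj0 : 0 ≤ Real.log (mu j) := Real.log_nonneg (one_le_mu j)
    have habs : |Real.log (mu i) - Real.log (mu j)| ≤ Real.log (3 * K) :=
      abs_le.mpr ⟨by linarith, by linarith⟩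
    have hstep2 : Real.log (3 * K) ≤ (2 * K * Real.log (3 * K)) / mu i := by
      rw [le_div_iff₀ hmui]
      nlinarith
    have hstep3 : (2 * K * Real.log (3 * K)) / mu i
        ≤ (2 * K * Real.log (3 * K) + 2 * K) / mu i := by
      apply div_le_div_of_nonneg_right ?_ hmui.le
      linarith
    linarith
  · -- large region
    push_neg at hsm
    have hnui1 : (1 : ℝ) ≤ ((nu i : ℤ) : ℝ) := by
      have : (1 : ℤ) ≤ nu i := by omega
      exact_mod_cast this
    have hx : mu i = ((nu i : ℤ) : ℝ) := max_eq_left hnui1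
    have hnuiR : 2 * (K : ℝ) + 1 ≤ ((nu i : ℤ) : ℝ) := by
      have : 2 * (K : ℤ) + 1 ≤ nu i := by omega
      exact_mod_cast this
    have hyx : mu j ≤ mu i + K := by
      have h1 : ((nu j : ℤ) : ℝ) ≤ ((nu i : ℤ) : ℝ) + K := by exact_mod_cast hji
      rw [hx]
      apply max_le h1 (by linarith)
    have hxy : mu i ≤ mu j + K := by
      have h1 : ((nu i : ℤ) : ℝ) ≤ ((nu j : ℤ) : ℝ) + K := by exact_mod_cast hij
      rw [hx]
      calc ((nu i : ℤ) : ℝ) ≤ ((nu j : ℤ) : ℝ) + K := h1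
        _ ≤ mu j + K := by have h2 : ((nu j : ℤ) : ℝ) ≤ mu j := le_max_left _ _; linarith
    have hKnn : (0 : ℝ) ≤ K := by linarith
    have habs := abs_log_sub_le (one_le_mu i) (one_le_mu j) hxy hyx
    have hmin : mu i - K ≤ min (mu i) (mu j) := by
      apply le_min (by linarith)
      linarith
    have hminpos : (0 : ℝ) < mu i - K := by rw [hx]; linarith
    have h5 : (K : ℝ) / min (mu i) (mu j) ≤ K / (mu i - K) :=
      div_le_div_of_nonneg_left hKnn hminpos hmin
    have h6 : (K : ℝ) / (mu i - K) ≤ 2 * K / mu i := by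
      rw [div_le_div_iff₀ hminpos hmui]
      have : 2 * (K : ℝ) ≤ mu i := by rw [hx]; linarith
      nlinarith
    have h7 : 2 * (K : ℝ) / mu i ≤ (2 * K * Real.log (3 * K) + 2 * K) / mu i := by
      apply div_le_div_of_nonneg_right ?_ hmui.le
      nlinarith
    linarith

lemma gtest_grad_le (N K : ℕ) (hN : 2 ≤ N) (hK1 : 1 ≤ K) {i j : ℤ × ℤ}
    (hstep : nu (i - j) ≤ (K : ℤ)) :
    |gtest N i - gtest N j|
      ≤ (2 * K * Real.log (3 * K) + 2 * K) / (Real.log N * mu i) := by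
  have hL := log_N_pos N hN
  have hmui := mu_pos i
  calc |gtest N i - gtest N j|
      ≤ |Real.log (mu i) - Real.log (mu j)| / Real.log N := gtest_lip N hN i j
    _ ≤ ((2 * K * Real.log (3 * K) + 2 * K) / mu i) / Real.log N := by
        apply div_le_div_of_nonneg_right (log_mu_diff_le K hK1 hstep) hL.le
    _ = (2 * K * Real.log (3 * K) + 2 * K) / (Real.log N * mu i) := by
        rw [div_div, mul_comm (mu i) (Real.log N)]

lemma gtest_bdry_le (N K : ℕ) (hN : 2 ≤ N) (hK1 : 1 ≤ K) (h3K : 3 * K ≤ N)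
    {i : ℤ × ℤ} (hi : (N : ℤ) - K < nu i) :
    gtest N i ≤ 2 * K / ((N : ℝ) * Real.log N) := by
  have hL := log_N_pos N hN
  have hKR : (1 : ℝ) ≤ (K : ℝ) := by exact_mod_cast hK1
  have hNR : 3 * (K : ℝ) ≤ (N : ℝ) := by exact_mod_cast h3K
  have hNpos : (0 : ℝ) < N := by linarith
  have hNK1 : (1 : ℝ) ≤ (N : ℝ) - K := by linarith
  have hNKpos : (0 : ℝ) < (N : ℝ) - K := by linarith
  have hmu : (N : ℝ) - K ≤ mu i := by
    have h1 : ((nu i : ℤ) : ℝ) ≥ (N : ℝ) - K := by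
      have : (N : ℤ) - K + 1 ≤ nu i := hi
      have h2 : ((N : ℤ) - K + 1 : ℤ) ≤ nu i := this
      have h3 : (((N : ℤ) - K + 1 : ℤ) : ℝ) ≤ ((nu i : ℤ) : ℝ) := by exact_mod_cast h2
      push_cast at h3
      linarith
    calc (N : ℝ) - K ≤ ((nu i : ℤ) : ℝ) := h1
      _ ≤ mu i := le_max_left _ _
  apply max_le
  · positivity
  · have hlog1 : Real.log ((N : ℝ) - K) ≤ Real.log (mu i) :=
      Real.log_le_log hNKpos hmu
    have hlog2 : Real.log (N : ℝ) - Real.log ((N : ℝ) - K) ≤ (K : ℝ) / ((N : ℝ) - K) := by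
      have h1 : Real.log ((N : ℝ) / ((N : ℝ) - K)) ≤ (N : ℝ) / ((N : ℝ) - K) - 1 :=
        Real.log_le_sub_one_of_pos (by positivity)
      rw [Real.log_div (ne_of_gt hNpos) (ne_of_gt hNKpos)] at h1
      have h2 : (N : ℝ) / ((N : ℝ) - K) - 1 = (K : ℝ) / ((N : ℝ) - K) := by field_simp; ring
      linarith
    have hlog3 : (K : ℝ) / ((N : ℝ) - K) ≤ 2 * K / (N : ℝ) := by
      rw [div_le_div_iff₀ hNKpos hNpos]
      nlinarith
    calc 1 - Real.log (mu i) / Real.log N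
        ≤ 1 - Real.log ((N : ℝ) - K) / Real.log N := by
          apply sub_le_sub_left
          exact div_le_div_of_nonneg_right hlog1 hL.le
      _ = (Real.log (N : ℝ) - Real.log ((N : ℝ) - K)) / Real.log N := by field_simp
      _ ≤ ((K : ℝ) / ((N : ℝ) - K)) / Real.log N := div_le_div_of_nonneg_right hlog2 hL.le
      _ ≤ (2 * K / (N : ℝ)) / Real.log N := div_le_div_of_nonneg_right hlog3 hL.le
      _ = 2 * K / ((N : ℝ) * Real.log N) := by rw [div_div]

end DirichletAux
set_option maxHeartbeats 1000000

namespace DirichletAux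

noncomputable def CE (K : ℕ) : ℝ :=
  22 * (2 * K * Real.log (3 * K) + 2 * K) ^ 2 + 40 * (K : ℝ) ^ 3
    + (((6 * (K : ℝ) + 1) ^ 2) ^ 2 / 2 + (6 * (K : ℝ) + 1) ^ 2) * Real.log (3 * K)

lemma CE_pos (K : ℕ) (hK1 : 1 ≤ K) : 0 < CE K := by
  have hKR : (1 : ℝ) ≤ (K : ℝ) := by exact_mod_cast hK1
  have hlog3K : 0 ≤ Real.log (3 * (K : ℝ)) := Real.log_nonneg (by linarith)
  unfold CE
  have h1 : (2 : ℝ) ≤ 2 * K * Real.log (3 * K) + 2 * K := by nlinarith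
  have h2 : (0 : ℝ) ≤ (((6 * (K : ℝ) + 1) ^ 2) ^ 2 / 2 + (6 * (K : ℝ) + 1) ^ 2)
      * Real.log (3 * K) := by positivity
  nlinarith

lemma En_gtest_le (p : ℤ × ℤ → ℝ) (hp : IsNiceKernel p) (K : ℕ) (hK1 : 1 ≤ K)
    (hK : ∀ x, p x ≠ 0 → nu x ≤ (K : ℤ)) (N : ℕ) (hN : 2 ≤ N) :
    En p (ΛN N) (gtest N) ≤ CE K / Real.log N := by
  classical
  have hL := log_N_pos N hN
  have hLhalf := log_N_half N hN
  have hKR : (1 : ℝ) ≤ (K : ℝ) := by exact_mod_cast hK1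
  set L := Real.log N with hLdef
  set c1 : ℝ := 2 * K * Real.log (3 * K) + 2 * K with hc1def
  have hlog3K : 0 ≤ Real.log (3 * (K : ℝ)) := Real.log_nonneg (by linarith)
  have hc1 : 2 ≤ c1 := by rw [hc1def]; nlinarith
  have hc1nn : 0 ≤ c1 := by linarith
  have hD : (0 : ℝ) ≤ ((6 * (K : ℝ) + 1) ^ 2) ^ 2 / 2 + (6 * (K : ℝ) + 1) ^ 2 := by positivity
  by_cases hbig : 3 * K ≤ N
  · -- main case
    have hNR : 3 * (K : ℝ) ≤ (N : ℝ) := by exact_mod_cast hbig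
    have hNpos : (0 : ℝ) < N := by linarith
    have hgrad : ∀ i ∈ ΛN N, ∑ j ∈ ΛN N, p (i - j) * (gtest N i - gtest N j) ^ 2
        ≤ (c1 / (L * mu i)) ^ 2 := by
      intro i _
      have hmui := mu_pos i
      calc ∑ j ∈ ΛN N, p (i - j) * (gtest N i - gtest N j) ^ 2
          ≤ ∑ j ∈ ΛN N, p (i - j) * (c1 / (L * mu i)) ^ 2 := by
            refine Finset.sum_le_sum fun j _ => ?_
            by_cases hp0 : p (i - j) = 0
            · rw [hp0]; simp
            · apply mul_le_mul_of_nonneg_left ?_ (hp.nonneg _)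
              have habs := gtest_grad_le N K hN hK1 (hK _ hp0)
              calc (gtest N i - gtest N j) ^ 2 = |gtest N i - gtest N j| ^ 2 := (sq_abs _).symm
                _ ≤ (c1 / (L * mu i)) ^ 2 := pow_le_pow_left₀ (abs_nonneg _) habs 2
        _ = (∑ j ∈ ΛN N, p (i - j)) * (c1 / (L * mu i)) ^ 2 := (Finset.sum_mul _ _ _).symm
        _ ≤ 1 * (c1 / (L * mu i)) ^ 2 :=
            mul_le_mul_of_nonneg_right (sum_in_le_one p hp _ i) (by positivity)
        _ = (c1 / (L * mu i)) ^ 2 := one_mul _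
    have hT1 : (1 / 2) * ∑ i ∈ ΛN N, ∑ j ∈ ΛN N, p (i - j) * (gtest N i - gtest N j) ^ 2
        ≤ 22 * c1 ^ 2 / L := by
      have step1 : ∑ i ∈ ΛN N, ∑ j ∈ ΛN N, p (i - j) * (gtest N i - gtest N j) ^ 2
          ≤ ∑ i ∈ ΛN N, (c1 / (L * mu i)) ^ 2 := Finset.sum_le_sum hgrad
      have step2 : ∑ i ∈ ΛN N, (c1 / (L * mu i)) ^ 2
          = (c1 / L) ^ 2 * ∑ i ∈ ΛN N, 1 / (mu i) ^ 2 := by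
        rw [Finset.mul_sum]
        refine Finset.sum_congr rfl fun i _ => ?_
        have h1 : mu i ≠ 0 := (mu_pos i).ne'
        have h2 : L ≠ 0 := hL.ne'
        field_simp
        try ring
      have step3 : (c1 / L) ^ 2 * ∑ i ∈ ΛN N, 1 / (mu i) ^ 2
          ≤ (c1 / L) ^ 2 * (16 + 12 * L) :=
        mul_le_mul_of_nonneg_left (sum_inv_mu_sq_le N) (by positivity)
      have step4 : (1 / 2) * ((c1 / L) ^ 2 * (16 + 12 * L)) ≤ 22 * c1 ^ 2 / L := by
        have e : (1 / 2) * ((c1 / L) ^ 2 * (16 + 12 * L))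
            = (c1 ^ 2 * (16 + 12 * L)) / (2 * L ^ 2) := by
          field_simp
          try ring
        rw [e, div_le_div_iff₀ (by positivity) hL]
        nlinarith [mul_nonneg (mul_nonneg (sq_nonneg c1) hL.le)
          (show (0 : ℝ) ≤ 32 * L - 16 by linarith)]
      calc (1 / 2) * ∑ i ∈ ΛN N, ∑ j ∈ ΛN N, p (i - j) * (gtest N i - gtest N j) ^ 2
          ≤ (1 / 2) * ((c1 / L) ^ 2 * (16 + 12 * L)) := by
            apply mul_le_mul_of_nonneg_left ?_ (by norm_num)
            calc ∑ i ∈ ΛN N, ∑ j ∈ ΛN N, p (i - j) * (gtest N i - gtest N j) ^ 2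
                ≤ ∑ i ∈ ΛN N, (c1 / (L * mu i)) ^ 2 := step1
              _ = (c1 / L) ^ 2 * ∑ i ∈ ΛN N, 1 / (mu i) ^ 2 := step2
              _ ≤ (c1 / L) ^ 2 * (16 + 12 * L) := step3
        _ ≤ 22 * c1 ^ 2 / L := step4
    have hKleN : K ≤ N := le_trans (by omega) hbig
    have hcastNK : (((N - K : ℕ)) : ℤ) = (N : ℤ) - K := by omega
    have hcastNKR : (((N - K : ℕ)) : ℝ) = (N : ℝ) - K := by
      exact Nat.cast_sub hKleN
    set c : ℝ := (2 * K / ((N : ℝ) * L)) ^ 2 with hcdef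
    have hcnn : 0 ≤ c := by positivity
    have hbterm : ∀ i ∈ ΛN N, bdryWeight p (ΛN N) i * (gtest N i) ^ 2
        ≤ (if i ∈ ΛN (N - K) then (0 : ℝ) else c) := by
      intro i hi
      by_cases hin : i ∈ ΛN (N - K)
      · rw [if_pos hin]
        have hz : bdryWeight p (ΛN N) i = 0 := by
          apply bdryWeight_eq_zero
          intro j hj
          by_contra hpne
          apply hj
          rw [mem_LN]
          have h1 : nu (i - j) ≤ (K : ℤ) := hK _ hpne
          have h2 : nu i ≤ (N : ℤ) - K := by
            rw [mem_LN, hcastNK] at hin; exact hin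
          have h3 : nu j ≤ nu i + nu (j - i) := nu_le_add j i
          rw [show nu (j - i) = nu (i - j) from by rw [← neg_sub i j, nu_neg]] at h3
          omega
        rw [hz, zero_mul]
      · rw [if_neg hin]
        have hnui : (N : ℤ) - K < nu i := by
          rw [mem_LN, hcastNK] at hin
          omega
        have hg := gtest_bdry_le N K hN hK1 hbig hnui
        calc bdryWeight p (ΛN N) i * (gtest N i) ^ 2
            ≤ 1 * (gtest N i) ^ 2 :=
              mul_le_mul_of_nonneg_right (bdryWeight_le_one p hp _ i) (sq_nonneg _)
          _ = (gtest N i) ^ 2 := one_mul _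
          _ ≤ c := pow_le_pow_left₀ (gtest_nonneg N i) hg 2
    have hT2 : ∑ i ∈ ΛN N, bdryWeight p (ΛN N) i * (gtest N i) ^ 2
        ≤ 40 * (K : ℝ) ^ 3 / L := by
      have hsub : (ΛN N).filter (fun i => ¬ i ∈ ΛN (N - K)) ⊆ ΛN N \ ΛN (N - K) := by
        intro i hi
        rw [Finset.mem_filter] at hi
        rw [Finset.mem_sdiff]
        exact hi
      have hcard : (((ΛN N).filter (fun i => ¬ i ∈ ΛN (N - K))).card : ℝ)
          ≤ 10 * (K : ℝ) * N := by
        have h1 : ((ΛN N).filter (fun i => ¬ i ∈ ΛN (N - K))).card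
            ≤ (ΛN N).card - (ΛN (N - K)).card :=
          le_trans (Finset.card_le_card hsub)
            (le_of_eq (Finset.card_sdiff_of_subset (LN_mono (by omega))))
        have hle : (ΛN (N - K)).card ≤ (ΛN N).card := Finset.card_le_card (LN_mono (by omega))
        have h2 : (((ΛN N).filter (fun i => ¬ i ∈ ΛN (N - K))).card : ℝ)
            ≤ ((ΛN N).card : ℝ) - ((ΛN (N - K)).card : ℝ) := by
          calc (((ΛN N).filter (fun i => ¬ i ∈ ΛN (N - K))).card : ℝ)
              ≤ (((ΛN N).card - (ΛN (N - K)).card : ℕ) : ℝ) := by exact_mod_cast h1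
            _ = ((ΛN N).card : ℝ) - ((ΛN (N - K)).card : ℝ) := Nat.cast_sub hle
        rw [card_LN, card_LN] at h2
        have e1 : (((2 * N + 1) ^ 2 : ℕ) : ℝ) = (2 * (N : ℝ) + 1) ^ 2 := by push_cast; ring
        have e2 : (((2 * (N - K) + 1) ^ 2 : ℕ) : ℝ) = (2 * ((N : ℝ) - K) + 1) ^ 2 := by
          push_cast [hcastNKR]
          try ring
        rw [e1, e2] at h2
        have h3 : (2 * (N : ℝ) + 1) ^ 2 - (2 * ((N : ℝ) - K) + 1) ^ 2
            ≤ 10 * (K : ℝ) * N := by nlinarith [hKR, hNR]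
        linarith
      calc ∑ i ∈ ΛN N, bdryWeight p (ΛN N) i * (gtest N i) ^ 2
          ≤ ∑ i ∈ ΛN N, (if i ∈ ΛN (N - K) then (0 : ℝ) else c) :=
            Finset.sum_le_sum hbterm
        _ = (((ΛN N).filter (fun i => ¬ i ∈ ΛN (N - K))).card : ℝ) * c := by
            rw [Finset.sum_ite, Finset.sum_const_zero, zero_add, Finset.sum_const,
              nsmul_eq_mul]
        _ ≤ (10 * (K : ℝ) * N) * c := mul_le_mul_of_nonneg_right hcard hcnn
        _ = (40 * (K : ℝ) ^ 3 / L) * (1 / ((N : ℝ) * L)) := by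
            have hgen : ∀ a b : ℝ, 0 < a → 0 < b →
                (10 * (K : ℝ) * a) * (2 * K / (a * b)) ^ 2
                  = (40 * K ^ 3 / b) * (1 / (a * b)) := by
              intro a b ha hb
              field_simp
              ring
            rw [hcdef]
            exact hgen (N : ℝ) L hNpos hL
        _ ≤ (40 * (K : ℝ) ^ 3 / L) * 1 := by
            apply mul_le_mul_of_nonneg_left ?_ (by positivity)
            rw [div_le_one (by positivity)]
            nlinarith
        _ = 40 * (K : ℝ) ^ 3 / L := mul_one _
    unfold En
    calc (1 / 2) * ∑ i ∈ ΛN N, ∑ j ∈ ΛN N, p (i - j) * (gtest N i - gtest N j) ^ 2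
          + ∑ i ∈ ΛN N, bdryWeight p (ΛN N) i * (gtest N i) ^ 2
        ≤ 22 * c1 ^ 2 / L + 40 * (K : ℝ) ^ 3 / L := add_le_add hT1 hT2
      _ = (22 * c1 ^ 2 + 40 * (K : ℝ) ^ 3) / L := by rw [← add_div]
      _ ≤ CE K / L := by
          apply div_le_div_of_nonneg_right ?_ hL.le
          unfold CE
          rw [← hc1def]
          have := mul_nonneg hD hlog3K
          linarith
  · -- small case
    push_neg at hbig
    have hNle : (N : ℝ) ≤ 3 * K := by
      have : N ≤ 3 * K := by omega
      exact_mod_cast this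
    have hNpos : (0 : ℝ) < N := by
      have : 0 < N := by omega
      exact_mod_cast this
    have hcardR : ((ΛN N).card : ℝ) ≤ (6 * (K : ℝ) + 1) ^ 2 := by
      rw [card_LN]
      have e1 : (((2 * N + 1) ^ 2 : ℕ) : ℝ) = (2 * (N : ℝ) + 1) ^ 2 := by push_cast; ring
      rw [e1]
      nlinarith
    have hEnle : En p (ΛN N) (gtest N)
        ≤ ((6 * (K : ℝ) + 1) ^ 2) ^ 2 / 2 + (6 * (K : ℝ) + 1) ^ 2 := by
      unfold En
      have hterm : ∀ i ∈ ΛN N, ∀ j ∈ ΛN N,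
          p (i - j) * (gtest N i - gtest N j) ^ 2 ≤ 1 := by
        intro i _ j _
        have h1 := gtest_nonneg N i
        have h2 := gtest_nonneg N j
        have h3 := gtest_le_one N hN i
        have h4 := gtest_le_one N hN j
        have h5 : (gtest N i - gtest N j) ^ 2 ≤ 1 := by nlinarith
        calc p (i - j) * (gtest N i - gtest N j) ^ 2
            ≤ 1 * 1 := mul_le_mul (p_le_one p hp _) h5 (sq_nonneg _) zero_le_one
          _ = 1 := one_mul _
      have hbterm : ∀ i ∈ ΛN N, bdryWeight p (ΛN N) i * (gtest N i) ^ 2 ≤ 1 := by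
        intro i _
        have h1 := gtest_nonneg N i
        have h3 := gtest_le_one N hN i
        have h5 : (gtest N i) ^ 2 ≤ 1 := by nlinarith
        calc bdryWeight p (ΛN N) i * (gtest N i) ^ 2
            ≤ 1 * 1 := mul_le_mul (bdryWeight_le_one p hp _ i) h5 (sq_nonneg _) zero_le_one
          _ = 1 := one_mul _
      have hS1 : ∑ i ∈ ΛN N, ∑ j ∈ ΛN N, p (i - j) * (gtest N i - gtest N j) ^ 2
          ≤ ((6 * (K : ℝ) + 1) ^ 2) ^ 2 := by
        calc ∑ i ∈ ΛN N, ∑ j ∈ ΛN N, p (i - j) * (gtest N i - gtest N j) ^ 2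
            ≤ ∑ i ∈ ΛN N, ∑ j ∈ ΛN N, (1 : ℝ) := by
              refine Finset.sum_le_sum fun i hi => Finset.sum_le_sum fun j hj => hterm i hi j hj
          _ = ((ΛN N).card : ℝ) * ((ΛN N).card : ℝ) := by
              simp [Finset.sum_const, nsmul_eq_mul]
          _ ≤ (6 * (K : ℝ) + 1) ^ 2 * (6 * (K : ℝ) + 1) ^ 2 := by
              apply mul_le_mul hcardR hcardR (Nat.cast_nonneg _) (by positivity)
          _ = ((6 * (K : ℝ) + 1) ^ 2) ^ 2 := by ring
      have hS2 : ∑ i ∈ ΛN N, bdryWeight p (ΛN N) i * (gtest N i) ^ 2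
          ≤ (6 * (K : ℝ) + 1) ^ 2 := by
        calc ∑ i ∈ ΛN N, bdryWeight p (ΛN N) i * (gtest N i) ^ 2
            ≤ ∑ i ∈ ΛN N, (1 : ℝ) := Finset.sum_le_sum hbterm
          _ = ((ΛN N).card : ℝ) := by simp
          _ ≤ (6 * (K : ℝ) + 1) ^ 2 := hcardR
      linarith
    have hlogle : L ≤ Real.log (3 * (K : ℝ)) := by
      rw [hLdef]
      exact Real.log_le_log hNpos hNle
    calc En p (ΛN N) (gtest N)
        ≤ ((6 * (K : ℝ) + 1) ^ 2) ^ 2 / 2 + (6 * (K : ℝ) + 1) ^ 2 := hEnle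
      _ ≤ ((((6 * (K : ℝ) + 1) ^ 2) ^ 2 / 2 + (6 * (K : ℝ) + 1) ^ 2)
            * Real.log (3 * K)) / L := by
          rw [le_div_iff₀ hL]
          apply mul_le_mul_of_nonneg_left hlogle hD
      _ ≤ CE K / L := by
          apply div_le_div_of_nonneg_right ?_ hL.le
          unfold CE
          have h1 : (0:ℝ) ≤ 22 * (2 * (K : ℝ) * Real.log (3 * K) + 2 * K) ^ 2 := by positivity
          have h2 : (0:ℝ) ≤ 40 * (K : ℝ) ^ 3 := by positivity
          linarith

end DirichletAux

/-- **Dirichlet-energy estimate for the interpolating profile.** For the profile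
`ψ_i = R · P_i[T_{0} < τ_{Λ_N}]` one has `ψ₀ = R`, `ψ ≡ 0` outside `Λ_N`, and the
Dirichlet energy is at most `C R² / log N`, with `C` depending only on `p`. -/
theorem dirichlet_energy_of_profile (p : ℤ × ℤ → ℝ) (hp : IsNiceKernel p) :
    ∃ C : ℝ, 0 < C ∧ ∀ N : ℕ, 2 ≤ N → ∀ R : ℝ,
      (R * hitProb p (ΛN N) (0, 0) = R) ∧
      (∀ i ∉ ΛN N, R * hitProb p (ΛN N) i = 0) ∧
      (1 / 2) * ∑ i ∈ ΛN N, ∑ j ∈ ΛN N,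
          p (i - j) * (R * hitProb p (ΛN N) i - R * hitProb p (ΛN N) j) ^ 2
        + ∑ i ∈ ΛN N, bdryWeight p (ΛN N) i * (R * hitProb p (ΛN N) i) ^ 2
        ≤ C * R ^ 2 / Real.log N := by
  classical
  obtain ⟨Rg, hRg⟩ := hp.finiteRange
  refine ⟨DirichletAux.CE (Rg + 1), DirichletAux.CE_pos (Rg + 1) (by omega), ?_⟩
  intro N hN R
  have h0 : ((0 : ℤ), (0 : ℤ)) ∈ ΛN N := by
    have hnu : DirichletAux.nu ((0 : ℤ), (0 : ℤ)) = 0 := by simp [DirichletAux.nu]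
    rw [DirichletAux.mem_LN, hnu]
    exact_mod_cast Nat.zero_le N
  refine ⟨?_, ?_, ?_⟩
  · rw [DirichletAux.hitProb_origin p hp _ h0, mul_one]
  · intro i hi
    rw [DirichletAux.hitProb_not_mem p hp _ h0 hi, mul_zero]
  · have hK : ∀ x, p x ≠ 0 → DirichletAux.nu x ≤ ((Rg + 1 : ℕ) : ℤ) := by
      intro x hx
      obtain ⟨h1, h2⟩ := hRg x hx
      refine max_le ?_ ?_
      · refine le_trans h1 ?_
        push_cast
        omega
      · refine le_trans h2 ?_
        push_cast
        omega
    have key : (1 / 2) * ∑ i ∈ ΛN N, ∑ j ∈ ΛN N,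
          p (i - j) * (R * hitProb p (ΛN N) i - R * hitProb p (ΛN N) j) ^ 2
        + ∑ i ∈ ΛN N, bdryWeight p (ΛN N) i * (R * hitProb p (ΛN N) i) ^ 2
        = R ^ 2 * DirichletAux.En p (ΛN N) (hitProb p (ΛN N)) := by
      have e1 : ∑ i ∈ ΛN N, ∑ j ∈ ΛN N,
            p (i - j) * (R * hitProb p (ΛN N) i - R * hitProb p (ΛN N) j) ^ 2
          = R ^ 2 * ∑ i ∈ ΛN N, ∑ j ∈ ΛN N,
              p (i - j) * (hitProb p (ΛN N) i - hitProb p (ΛN N) j) ^ 2 := by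
        rw [Finset.mul_sum]
        refine Finset.sum_congr rfl fun i _ => ?_
        rw [Finset.mul_sum]
        exact Finset.sum_congr rfl fun j _ => by ring
      have e2 : ∑ i ∈ ΛN N, bdryWeight p (ΛN N) i * (R * hitProb p (ΛN N) i) ^ 2
          = R ^ 2 * ∑ i ∈ ΛN N, bdryWeight p (ΛN N) i * (hitProb p (ΛN N) i) ^ 2 := by
        rw [Finset.mul_sum]
        exact Finset.sum_congr rfl fun i _ => by ring
      rw [e1, e2]
      unfold DirichletAux.En
      ring
    rw [key]
    have h1 := DirichletAux.En_le p hp (ΛN N) h0 (DirichletAux.gtest N)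
      (DirichletAux.gtest_origin N)
    have h2 := DirichletAux.En_gtest_le p hp (Rg + 1) (by omega) hK N hN
    calc R ^ 2 * DirichletAux.En p (ΛN N) (hitProb p (ΛN N))
        ≤ R ^ 2 * (DirichletAux.CE (Rg + 1) / Real.log N) :=
          mul_le_mul_of_nonneg_left (h1.trans h2) (sq_nonneg R)
      _ = DirichletAux.CE (Rg + 1) * R ^ 2 / Real.log N := by ring
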